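/- Let A ⊂ ℝ^ℓ be compact with Leb(A) > 0, let F_n, F : A → ℝ be continuous with F_n → F uniformly on A, and let λ_n ∈ (0,1] with λ_n ↓ 0. Define Gibbs probability measures α_n on A by α_n(da) := e^{F_n(a)/λ_n} da / ∫_A e^{F_n(a′)/λ_n} da′ (da = Lebesgue measure restricted to A). Assume Leb({a ∈ A : F(a) ≥ max_A F − ε}) > 0 for every ε > 0, and that α_n → α weakly for some α ∈ 𝒫(A). Then supp(α) ⊆ argmax_{a∈A} F(a); equivalently, α(K) = 0 for every compact K ⊂ A with sup_K F < max_A F. -/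

import Mathlib

open MeasureTheory Filter Topology

/-- STATEMENT 15: Let `A ⊂ ℝ^ℓ` be compact with `Leb(A) > 0`, `F_n, F : A → ℝ` continuous
with `F_n → F` uniformly on `A`, and `λ_n ∈ (0,1]` with `λ_n ↓ 0`.  Let `α_n` be the Gibbs
probability measures `α_n(da) = e^{F_n(a)/λ_n} da / ∫_A e^{F_n/λ_n} da` (with `da` Lebesgue
measure restricted to `A`).  Assume `Leb({a ∈ A : F(a) ≥ max_A F − ε}) > 0` for every
`ε > 0`, and that `α_n → α` weakly.  Then the support of `α` is contained in
`argmax_A F`; equivalently (as stated here), `α(K) = 0` for every compact `K ⊆ A`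
with `sup_K F < max_A F`. -/
theorem gibbs_measures_concentrate_on_argmax
    {l : ℕ}
    (Aset : Set (EuclideanSpace ℝ (Fin l)))
    (hAcompact : IsCompact Aset) (hAne : Aset.Nonempty)
    (hALeb : 0 < MeasureTheory.volume Aset)
    (Fseq : ℕ → EuclideanSpace ℝ (Fin l) → ℝ) (F : EuclideanSpace ℝ (Fin l) → ℝ)
    (hFcont : ContinuousOn F Aset) (hFncont : ∀ n, ContinuousOn (Fseq n) Aset)
    (hFunif : TendstoUniformlyOn Fseq F atTop Aset)
    (lam : ℕ → ℝ) (hlam : ∀ n, lam n ∈ Set.Ioc (0 : ℝ) 1)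
    (hlamanti : Antitone lam) (hlam0 : Tendsto lam atTop (𝓝 (0 : ℝ)))
    -- the Gibbs measures α_n, characterized measure-theoretically
    (αseq : ℕ → ProbabilityMeasure (EuclideanSpace ℝ (Fin l)))
    (hgibbs : ∀ n, (αseq n : Measure (EuclideanSpace ℝ (Fin l))) =
      ((MeasureTheory.volume.restrict Aset).withDensity
        (fun a => ENNReal.ofReal (Real.exp (Fseq n a / lam n) /
          ∫ a' in Aset, Real.exp (Fseq n a' / lam n)))))
    -- positivity of the near-maximizer sets (a consequence of the cone condition)
    (hpos : ∀ ε : ℝ, 0 < ε →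
      0 < MeasureTheory.volume {a ∈ Aset | sSup (F '' Aset) - ε ≤ F a})
    (α : ProbabilityMeasure (EuclideanSpace ℝ (Fin l)))
    (hconv : Tendsto αseq atTop (𝓝 α)) :
    ∀ K : Set (EuclideanSpace ℝ (Fin l)), IsCompact K → K ⊆ Aset →
      sSup (F '' K) < sSup (F '' Aset) →
      (α : Measure (EuclideanSpace ℝ (Fin l))) K = 0 := by
  intro K hKcomp hKA hKlt
  classical
  set M := sSup (F '' Aset) with hMdef
  set m := sSup (F '' K) with hmdef
  set ε : ℝ := (M - m) / 5 with hεdef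
  have hεpos : 0 < ε := by
    have : m < M := hKlt
    rw [hεdef]; linarith
  -- Tietze extension of F from Aset to the whole space
  obtain ⟨G, hGr⟩ := ContinuousMap.exists_restrict_eq hAcompact.isClosed
    (⟨Aset.restrict F, hFcont.restrict⟩ : C(Aset, ℝ))
  have hGF : ∀ a ∈ Aset, G a = F a := by
    intro a ha
    have := congrFun (congrArg DFunLike.coe hGr) ⟨a, ha⟩
    exact this
  set U : Set (EuclideanSpace ℝ (Fin l)) := {x | G x < m + ε} with hUdef
  have hUopen : IsOpen U := isOpen_lt G.continuous continuous_const
  have hKU : K ⊆ U := by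
    intro a ha
    have hFa : F a ≤ m :=
      le_csSup (hKcomp.image_of_continuousOn (hFcont.mono hKA)).bddAbove
        (Set.mem_image_of_mem F ha)
    have hGa : G a = F a := hGF a (hKA ha)
    have : G a < m + ε := by rw [hGa]; linarith
    exact this
  -- the near-maximizer set
  set S : Set (EuclideanSpace ℝ (Fin l)) := {a ∈ Aset | M - ε ≤ F a} with hSdef
  have hSsub : S ⊆ Aset := fun a ha => ha.1
  have hSeq : S = Aset ∩ F ⁻¹' Set.Ici (M - ε) := by
    ext a; simp [hSdef, Set.mem_setOf_eq, and_comm]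
  have hSclosed : IsClosed S := by
    rw [hSeq]
    exact hFcont.preimage_isClosed_of_isClosed hAcompact.isClosed isClosed_Ici
  have hvolS : 0 < volume S := hpos ε hεpos
  have hvolAne : volume Aset ≠ ⊤ := hAcompact.measure_lt_top.ne
  have hvolSne : volume S ≠ ⊤ :=
    ((measure_mono hSsub).trans_lt hAcompact.measure_lt_top).ne
  set s : ℝ := (volume S).toReal with hsdef
  set v : ℝ := (volume Aset).toReal with hvdef
  have hs : 0 < s := ENNReal.toReal_pos hvolS.ne' hvolSne
  have hv : 0 ≤ v := ENNReal.toReal_nonneg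
  -- main estimate
  have hbound : ∀ᶠ n in atTop, (αseq n : Measure (EuclideanSpace ℝ (Fin l))) U ≤
      ENNReal.ofReal ((v / s) * Real.exp (-ε / lam n)) := by
    filter_upwards [(Metric.tendstoUniformlyOn_iff.mp hFunif) ε hεpos] with n hn
    set L := lam n with hLdef
    have hL : 0 < L := (hlam n).1
    set Z : ℝ := ∫ a' in Aset, Real.exp (Fseq n a' / L) with hZdef
    have hcont : ContinuousOn (fun a => Real.exp (Fseq n a / L)) Aset :=
      Real.continuous_exp.comp_continuousOn ((hFncont n).div_const L)
    have hint : IntegrableOn (fun a => Real.exp (Fseq n a / L)) Aset volume :=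
      hcont.integrableOn_compact hAcompact
    -- lower bound on the normalizing constant
    have hZ1 : Real.exp ((M - 2 * ε) / L) * s ≤ Z := by
      have h0 : ∀ a ∈ S, Real.exp ((M - 2 * ε) / L) ≤ Real.exp (Fseq n a / L) := by
        intro a ha
        have h1 : M - ε ≤ F a := ha.2
        have h2 : dist (F a) (Fseq n a) < ε := hn a ha.1
        rw [Real.dist_eq] at h2
        have h3 : M - 2 * ε ≤ Fseq n a := by
          have := abs_lt.mp h2
          linarith [this.1, this.2]
        exact Real.exp_le_exp.mpr (div_le_div_of_nonneg_right h3 hL.le)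
      have hstep1 : Real.exp ((M - 2 * ε) / L) * s
          = ∫ _ in S, Real.exp ((M - 2 * ε) / L) := by
        rw [setIntegral_const, smul_eq_mul, mul_comm]; rfl
      have hstep2 : (∫ _ in S, Real.exp ((M - 2 * ε) / L))
          ≤ ∫ a in S, Real.exp (Fseq n a / L) := by
        apply setIntegral_mono_on
        · exact integrableOn_const hvolSne
        · exact hint.mono_set hSsub
        · exact hSclosed.measurableSet
        · exact h0
      have hstep3 : (∫ a in S, Real.exp (Fseq n a / L)) ≤ Z := by
        apply setIntegral_mono_set hint
        · exact Eventually.of_forall fun a => (Real.exp_pos _).le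
        · exact HasSubset.Subset.eventuallyLE hSsub
      linarith [hstep1, hstep2, hstep3]
    have hZpos : 0 < Z :=
      lt_of_lt_of_le (by positivity) hZ1
    -- compute the measure
    have hmeas : (αseq n : Measure (EuclideanSpace ℝ (Fin l))) U
        = ∫⁻ x in U ∩ Aset, ENNReal.ofReal (Real.exp (Fseq n x / L) / Z) := by
      rw [hgibbs n, withDensity_apply _ hUopen.measurableSet,
        Measure.restrict_restrict hUopen.measurableSet]
    -- pointwise bound on U ∩ Aset
    have hpt : ∀ x ∈ U ∩ Aset, ENNReal.ofReal (Real.exp (Fseq n x / L) / Z)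
        ≤ ENNReal.ofReal (Real.exp ((m + 2 * ε) / L) / Z) := by
      intro x hx
      have h1 : G x < m + ε := hx.1
      have h2 : F x = G x := (hGF x hx.2).symm
      have h3 : dist (F x) (Fseq n x) < ε := hn x hx.2
      rw [Real.dist_eq] at h3
      have h4 : Fseq n x ≤ m + 2 * ε := by
        have := abs_lt.mp h3
        linarith [this.1, this.2]
      apply ENNReal.ofReal_le_ofReal
      gcongr
    -- the main calc
    calc (αseq n : Measure (EuclideanSpace ℝ (Fin l))) U
        = ∫⁻ x in U ∩ Aset, ENNReal.ofReal (Real.exp (Fseq n x / L) / Z) := hmeas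
      _ ≤ ∫⁻ _ in U ∩ Aset, ENNReal.ofReal (Real.exp ((m + 2 * ε) / L) / Z) := by
          refine lintegral_mono_ae ?_
          exact (ae_restrict_iff'
            (hUopen.measurableSet.inter hAcompact.isClosed.measurableSet)).mpr
            (Eventually.of_forall hpt)
      _ = ENNReal.ofReal (Real.exp ((m + 2 * ε) / L) / Z) * volume (U ∩ Aset) :=
          setLIntegral_const _ _
      _ ≤ ENNReal.ofReal (Real.exp ((m + 2 * ε) / L) / Z) * volume Aset := by
          gcongr
          exact Set.inter_subset_right
      _ = ENNReal.ofReal (Real.exp ((m + 2 * ε) / L) / Z * v) := by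
          rw [← ENNReal.ofReal_toReal hvolAne, ← ENNReal.ofReal_mul (by positivity), hvdef]
      _ ≤ ENNReal.ofReal ((v / s) * Real.exp (-ε / L)) := by
          apply ENNReal.ofReal_le_ofReal
          have key : Real.exp ((m + 2 * ε) / L) / Z ≤ Real.exp (-ε / L) / s := by
            have h1 : Real.exp ((m + 2 * ε) / L) / Z
                ≤ Real.exp ((m + 2 * ε) / L) / (Real.exp ((M - 2 * ε) / L) * s) := by
              gcongr
            have h2 : Real.exp ((m + 2 * ε) / L) / (Real.exp ((M - 2 * ε) / L) * s)
                = Real.exp (-ε / L) / s := by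
              rw [div_mul_eq_div_div, ← Real.exp_sub, ← sub_div]
              have h5 : m + 2 * ε - (M - 2 * ε) = -ε := by rw [hεdef]; ring
              rw [h5]
            linarith [h1, h2.symm.le, h2.le]
          calc Real.exp ((m + 2 * ε) / L) / Z * v ≤ Real.exp (-ε / L) / s * v :=
                mul_le_mul_of_nonneg_right key hv
            _ = (v / s) * Real.exp (-ε / L) := by ring
  -- the upper bound tends to zero
  have hlim : Tendsto (fun n => ENNReal.ofReal ((v / s) * Real.exp (-ε / lam n)))
      atTop (𝓝 0) := by
    have hlam' : Tendsto lam atTop (𝓝[>] (0 : ℝ)) :=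
      tendsto_nhdsWithin_of_tendsto_nhds_of_eventually_within _ hlam0
        (Eventually.of_forall fun n => (hlam n).1)
    have h1 : Tendsto (fun n => (lam n)⁻¹) atTop atTop := hlam'.inv_tendsto_nhdsGT_zero
    have h2 : Tendsto (fun n => ε * (lam n)⁻¹) atTop atTop := h1.const_mul_atTop hεpos
    have h3 : Tendsto (fun n => -ε / lam n) atTop atBot := by
      have h := tendsto_neg_atTop_atBot.comp h2
      have heq : (fun n => -ε / lam n) = fun n => -(ε * (lam n)⁻¹) := by
        funext n; rw [div_eq_mul_inv, neg_mul]
      rw [heq]; exact h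
    have h4 : Tendsto (fun n => Real.exp (-ε / lam n)) atTop (𝓝 0) :=
      Real.tendsto_exp_atBot.comp h3
    have h5 : Tendsto (fun n => (v / s) * Real.exp (-ε / lam n)) atTop (𝓝 ((v / s) * 0)) :=
      h4.const_mul _
    rw [mul_zero] at h5
    have h6 := (ENNReal.continuous_ofReal.tendsto 0).comp h5
    simpa [Function.comp_def] using h6
  have htend : Tendsto (fun n => (αseq n : Measure (EuclideanSpace ℝ (Fin l))) U)
      atTop (𝓝 0) :=
    tendsto_of_tendsto_of_tendsto_of_le_of_le' tendsto_const_nhds hlim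
      (Eventually.of_forall fun n => zero_le) hbound
  have hliminf :=
    MeasureTheory.ProbabilityMeasure.le_liminf_measure_open_of_tendsto hconv hUopen
  rw [htend.liminf_eq] at hliminf
  have hU0 : (α : Measure (EuclideanSpace ℝ (Fin l))) U = 0 :=
    le_antisymm hliminf zero_le
  exact le_antisymm (hU0 ▸ measure_mono hKU) zero_le
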